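/- Let d < n₂ − 2 and let f(x) ∝ (1 − ‖x‖²)^{(n₂−d)/2 − 1} on the unit ball of ℝ^d be the density of z_{≤d}, the first d coordinates of a uniform point on S^{n₂−1}. Fix ℓ ∈ ℝ^d with ‖ℓ‖ ≤ min{0.1, (ε/5)/√n₂} for some ε ∈ (0,1]. Then for every t ∈ ℝ^d with ‖t‖ ≤ 0.9 and |⟨t, ℓ⟩| ≤ ε/(50 n₂), both t and t − ℓ lie in the unit ball, and ln(f(t)/f(t − ℓ)) ≤ ε/2. -/

import Mathlib

open scoped RealInnerProductSpace

set_option maxHeartbeats 1000000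

/-- Multivariate log-density-ratio bound for the shifted projected sphere density
`f(x) = C (1 - ‖x‖²)^{(n₂-d)/2 - 1}`: if `‖ℓ‖ ≤ min{0.1, (ε/5)/√n₂}`, then for
every `t` with `‖t‖ ≤ 0.9` and `|⟨t, ℓ⟩| ≤ ε/(50 n₂)`, both `t` and `t - ℓ` lie
in the unit ball and `ln(f(t)/f(t - ℓ)) ≤ ε/2`. -/
theorem stmt_14 (d n₂ : ℕ) (hd : d + 2 < n₂) (ε : ℝ) (hε0 : 0 < ε) (hε1 : ε ≤ 1)
    (C : ℝ) (hC : 0 < C)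
    (l t : EuclideanSpace ℝ (Fin d))
    (hl : ‖l‖ ≤ min 0.1 (ε / 5 / Real.sqrt n₂))
    (ht : ‖t‖ ≤ 0.9) (hip : |⟪t, l⟫| ≤ ε / (50 * n₂)) :
    ‖t‖ < 1 ∧ ‖t - l‖ < 1 ∧
      Real.log ((C * (1 - ‖t‖ ^ 2) ^ (((n₂ : ℝ) - d) / 2 - 1)) /
        (C * (1 - ‖t - l‖ ^ 2) ^ (((n₂ : ℝ) - d) / 2 - 1))) ≤ ε / 2 := by
  have hn3 : (3 : ℝ) ≤ (n₂ : ℝ) := by exact_mod_cast Nat.succ_le_of_lt (by omega)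
  have hn0 : (0 : ℝ) < (n₂ : ℝ) := by linarith
  have hl1 : ‖l‖ ≤ 0.1 := le_trans hl (min_le_left _ _)
  have hl2 : ‖l‖ ≤ ε / 5 / Real.sqrt n₂ := le_trans hl (min_le_right _ _)
  have hlnn : (0 : ℝ) ≤ ‖l‖ := norm_nonneg _
  have hlsq : ‖l‖ ^ 2 ≤ ε ^ 2 / (25 * n₂) := by
    have h1 : ‖l‖ ^ 2 ≤ (ε / 5 / Real.sqrt n₂) ^ 2 := by
      exact pow_le_pow_left₀ hlnn hl2 2
    have hs : (Real.sqrt n₂) ^ 2 = (n₂ : ℝ) := Real.sq_sqrt (le_of_lt hn0)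
    have : (ε / 5 / Real.sqrt n₂) ^ 2 = ε ^ 2 / (25 * n₂) := by
      field_simp
      rw [hs]; norm_num
    linarith [this ▸ h1]
  have hipl : -(ε / (50 * n₂)) ≤ ⟪t, l⟫ ∧ ⟪t, l⟫ ≤ ε / (50 * n₂) := abs_le.mp hip
  have hexp : ‖t - l‖ ^ 2 = ‖t‖ ^ 2 - 2 * ⟪t, l⟫ + ‖l‖ ^ 2 := by
    exact norm_sub_sq_real t l
  have heps : ε ^ 2 / (25 * n₂) ≤ ε / (25 * n₂) := by
    apply div_le_div_of_nonneg_right _ (by linarith)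
    nlinarith
  have hεn : ε / (25 * n₂) ≤ 1 / 75 := by
    rw [div_le_div_iff₀ (by linarith) (by norm_num)]
    nlinarith
  have ha : ‖t‖ ^ 2 ≤ 0.81 := by nlinarith [norm_nonneg t]
  have hb : ‖t - l‖ ^ 2 ≤ 0.84 := by
    have h2 : -2 * ⟪t, l⟫ ≤ 2 * (ε / (50 * n₂)) := by linarith [hipl.1]
    have h3 : 2 * (ε / (50 * n₂)) = ε / (25 * n₂) := by ring
    nlinarith
  have htl1 : ‖t - l‖ < 1 := by nlinarith [norm_nonneg (t - l)]
  have ht1 : ‖t‖ < 1 := by linarith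
  refine ⟨ht1, htl1, ?_⟩
  set a := ‖t‖ ^ 2 with ha_def
  set b := ‖t - l‖ ^ 2 with hb_def
  set p := ((n₂ : ℝ) - d) / 2 - 1 with hp_def
  clear_value a b p
  have hpa : (0 : ℝ) < 1 - a := by linarith
  have hpb : (0 : ℝ) < 1 - b := by linarith
  have hp0 : 0 < p := by
    have : (d : ℝ) + 2 < (n₂ : ℝ) := by exact_mod_cast hd
    simp only [hp_def]; linarith
  have hpn : p ≤ (n₂ : ℝ) / 2 := by
    have : (0 : ℝ) ≤ (d : ℝ) := Nat.cast_nonneg d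
    simp only [hp_def]; linarith
  have hA : (0 : ℝ) < (1 - a) ^ p := Real.rpow_pos_of_pos hpa p
  have hB : (0 : ℝ) < (1 - b) ^ p := Real.rpow_pos_of_pos hpb p
  have hsimp : (C * (1 - a) ^ p) / (C * (1 - b) ^ p) = (1 - a) ^ p / (1 - b) ^ p :=
    mul_div_mul_left _ _ (ne_of_gt hC)
  rw [hsimp, Real.log_div (ne_of_gt hA) (ne_of_gt hB), Real.log_rpow hpa,
    Real.log_rpow hpb, ← mul_sub]
  have hlog : Real.log (1 - a) - Real.log (1 - b) ≤ (b - a) / (1 - b) := by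
    rw [← Real.log_div (ne_of_gt hpa) (ne_of_gt hpb)]
    have := Real.log_le_sub_one_of_pos (div_pos hpa hpb)
    have heq : (1 - a) / (1 - b) - 1 = (b - a) / (1 - b) := by
      field_simp
      ring
    linarith [heq ▸ this]
  have hba : b - a ≤ 2 * ε / (25 * n₂) := by
    have h2 : -2 * ⟪t, l⟫ ≤ 2 * (ε / (50 * n₂)) := by linarith [hipl.1]
    have : 2 * (ε / (50 * n₂)) = ε / (25 * n₂) := by ring
    have key : ε / (25 * (n₂:ℝ)) + ε / (25 * (n₂:ℝ)) = 2 * ε / (25 * (n₂:ℝ)) := by ring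
    linarith
  have hfinal : p * ((b - a) / (1 - b)) ≤ ε / 2 := by
    rw [mul_div_assoc' , div_le_iff₀ hpb]
    rcases le_or_gt (b - a) 0 with h | h
    · nlinarith [mul_nonneg hp0.le (neg_nonneg.mpr h), mul_pos hε0 hpb]
    · have h1 : p * (b - a) ≤ ((n₂ : ℝ) / 2) * (b - a) := by nlinarith
      have h2 : ((n₂ : ℝ) / 2) * (2 * ε / (25 * n₂)) = ε / 25 := by
        field_simp
      nlinarith
  calc p * (Real.log (1 - a) - Real.log (1 - b))
      ≤ p * ((b - a) / (1 - b)) := by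
        exact mul_le_mul_of_nonneg_left hlog (le_of_lt hp0)
    _ ≤ ε / 2 := hfinal
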